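/- Let p : Ï → [0,1] be the projection ⟨x,i⟩ ↦ x from the split interval onto the unit interval. Then every selection s : [0,1] → Ï of the multimap p⁻¹ (i.e., every function s with p(s(x)) = x for all x) is F_σ-measurable. -/

import Mathlib

/-- The split interval: `[0,1] × {0,1}` with the lexicographic order. -/
abbrev SplitInterval : Type := Set.Icc (0:ℝ) 1 ×ₗ Bool

instance : TopologicalSpace SplitInterval := Preorder.topology SplitInterval

instance : OrderTopology SplitInterval := ⟨rfl⟩

/-- The projection `⟨x,i⟩ ↦ x` of the split interval onto the unit interval. -/
def splitProj : SplitInterval → Set.Icc (0:ℝ) 1 := fun a => (ofLex a).1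

/-- A set is `Fσ` if it is a countable union of closed sets. -/
def IsFsigma {X : Type*} [TopologicalSpace X] (s : Set X) : Prop :=
  ∃ F : ℕ → Set X, (∀ n, IsClosed (F n)) ∧ s = ⋃ n, F n

lemma IsFsigma.union {X : Type*} [TopologicalSpace X] {s t : Set X}
    (hs : IsFsigma s) (ht : IsFsigma t) : IsFsigma (s ∪ t) := by
  obtain ⟨F, hF, rfl⟩ := hs
  obtain ⟨G, hG, rfl⟩ := ht
  exact ⟨fun n => F n ∪ G n, fun n => (hF n).union (hG n),
    (Set.iUnion_union_distrib F G).symm⟩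

lemma isFsigma_of_isOpen {X : Type*} [PseudoMetricSpace X] {U : Set X}
    (hU : IsOpen U) : IsFsigma U := by
  rcases Set.eq_empty_or_nonempty Uᶜ with h | hne
  · have hU' : U = Set.univ := by rwa [Set.compl_empty_iff] at h
    exact ⟨fun _ => Set.univ, fun _ => isClosed_univ, by rw [hU']; exact (Set.iUnion_const _).symm⟩
  · refine ⟨fun n => {x | 1 / (n + 1 : ℝ) ≤ Metric.infDist x Uᶜ}, ?_, ?_⟩
    · intro n
      exact isClosed_le continuous_const (Metric.continuous_infDist_pt _)
    · ext x
      simp only [Set.mem_iUnion, Set.mem_setOf_eq]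
      constructor
      · intro hx
        have hxpos : 0 < Metric.infDist x Uᶜ := by
          rw [← (hU.isClosed_compl.notMem_iff_infDist_pos hne)]
          simpa using hx
        obtain ⟨n, hn⟩ := exists_nat_one_div_lt hxpos
        exact ⟨n, le_of_lt hn⟩
      · rintro ⟨n, hn⟩
        by_contra hx
        have : Metric.infDist x Uᶜ = 0 :=
          Metric.infDist_zero_of_mem (by simpa using hx)
        rw [this] at hn
        have : (0:ℝ) < 1 / (n + 1 : ℝ) := by positivity
        linarith

lemma isFsigma_of_countable {X : Type*} [TopologicalSpace X] [T1Space X] {s : Set X}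
    (hs : s.Countable) : IsFsigma s := by
  rcases s.eq_empty_or_nonempty with rfl | hne
  · exact ⟨fun _ => ∅, fun _ => isClosed_empty, by simp⟩
  · obtain ⟨f, rfl⟩ := hs.exists_eq_range hne
    exact ⟨fun n => {f n}, fun _ => isClosed_singleton, by
      ext y; simp [Set.mem_range, eq_comm]⟩

/-- Every selection of the multimap `p⁻¹ : [0,1] ⊸ Ï` is Fσ-measurable. -/
theorem selection_of_splitProj_inv_Fsigma_measurable
    (s : Set.Icc (0:ℝ) 1 → SplitInterval) (hs : ∀ x, splitProj (s x) = x) :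
    ∀ U : Set SplitInterval, IsOpen U → IsFsigma (s ⁻¹' U) := by
  classical
  intro U hU
  set E : Set (Set.Icc (0:ℝ) 1) := s ⁻¹' U with hE
  set O : Set (Set.Icc (0:ℝ) 1) := interior E with hO
  -- the key representation of `s y`
  have hsy : ∀ y, s y = toLex (y, (ofLex (s y)).2) := by
    intro y
    have h1 : ofLex (s y) = (y, (ofLex (s y)).2) := Prod.ext (hs y) rfl
    calc s y = toLex (ofLex (s y)) := rfl
    _ = toLex (y, (ofLex (s y)).2) := by rw [h1]
  -- left and right "rational tag" predicates
  set Pl : ℚ → Set.Icc (0:ℝ) 1 → Prop :=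
    fun q x => (q:ℝ) < (x:ℝ) ∧ ∀ y : Set.Icc (0:ℝ) 1, (q:ℝ) < (y:ℝ) → y ≤ x → y ∈ E with hPl
  set Pr : ℚ → Set.Icc (0:ℝ) 1 → Prop :=
    fun q x => (x:ℝ) < (q:ℝ) ∧ ∀ y : Set.Icc (0:ℝ) 1, x ≤ y → (y:ℝ) < (q:ℝ) → y ∈ E with hPr
  set CL : Set (Set.Icc (0:ℝ) 1) := {x | x ∉ O ∧ ∃ q, Pl q x} with hCL
  set CR : Set (Set.Icc (0:ℝ) 1) := {x | x ∉ O ∧ ∃ q, Pr q x} with hCR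
  -- auxiliary interior facts
  have keyL : ∀ (q : ℚ) (x x' : Set.Icc (0:ℝ) 1), (x:ℝ) < (x':ℝ) → (q:ℝ) < (x:ℝ) →
      Pl q x' → x ∈ O := by
    intro q x x' hxx' hqx hP
    have hVopen : IsOpen ((fun y : Set.Icc (0:ℝ) 1 => (y:ℝ)) ⁻¹' Set.Ioo (q:ℝ) (x':ℝ)) :=
      isOpen_Ioo.preimage continuous_subtype_val
    have hVE : ((fun y : Set.Icc (0:ℝ) 1 => (y:ℝ)) ⁻¹' Set.Ioo (q:ℝ) (x':ℝ)) ⊆ E := by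
      intro z hz
      exact hP.2 z hz.1 (le_of_lt hz.2)
    exact interior_maximal hVE hVopen ⟨hqx, hxx'⟩
  have keyR : ∀ (q : ℚ) (x x' : Set.Icc (0:ℝ) 1), (x':ℝ) < (x:ℝ) → (x:ℝ) < (q:ℝ) →
      Pr q x' → x ∈ O := by
    intro q x x' hx'x hxq hP
    have hVopen : IsOpen ((fun y : Set.Icc (0:ℝ) 1 => (y:ℝ)) ⁻¹' Set.Ioo (x':ℝ) (q:ℝ)) :=
      isOpen_Ioo.preimage continuous_subtype_val
    have hVE : ((fun y : Set.Icc (0:ℝ) 1 => (y:ℝ)) ⁻¹' Set.Ioo (x':ℝ) (q:ℝ)) ⊆ E := by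
      intro z hz
      exact hP.2 z (le_of_lt hz.1) hz.2
    exact interior_maximal hVE hVopen ⟨hx'x, hxq⟩
  -- countability of CL and CR
  have hCLc : CL.Countable := by
    have hch : ∀ x : CL, ∃ q, Pl q (x : Set.Icc (0:ℝ) 1) := fun x => x.2.2
    choose g hg using hch
    have hinj : Function.Injective g := by
      intro x y hxy
      by_contra hne
      have hne' : (x : Set.Icc (0:ℝ) 1) ≠ y := fun h => hne (Subtype.ext h)
      rcases lt_trichotomy ((x : Set.Icc (0:ℝ) 1) : ℝ) ((y : Set.Icc (0:ℝ) 1) : ℝ) with h | h | h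
      · exact x.2.1 (keyL (g x) _ _ h (hg x).1 (hxy ▸ hg y))
      · exact hne' (Subtype.ext h)
      · exact y.2.1 (keyL (g y) _ _ h (hg y).1 (hxy ▸ hg x))
    exact Set.countable_coe_iff.mp hinj.countable
  have hCRc : CR.Countable := by
    have hch : ∀ x : CR, ∃ q, Pr q (x : Set.Icc (0:ℝ) 1) := fun x => x.2.2
    choose g hg using hch
    have hinj : Function.Injective g := by
      intro x y hxy
      by_contra hne
      have hne' : (x : Set.Icc (0:ℝ) 1) ≠ y := fun h => hne (Subtype.ext h)
      rcases lt_trichotomy ((x : Set.Icc (0:ℝ) 1) : ℝ) ((y : Set.Icc (0:ℝ) 1) : ℝ) with h | h | h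
      · exact y.2.1 (keyR (g y) _ _ h (hg y).1 (hxy ▸ hg x))
      · exact hne' (Subtype.ext h)
      · exact x.2.1 (keyR (g x) _ _ h (hg x).1 (hxy.symm ▸ hg y))
    exact Set.countable_coe_iff.mp hinj.countable
  have h0c : ({x : Set.Icc (0:ℝ) 1 | (x:ℝ) = 0}).Countable := by
    apply Set.Subsingleton.countable
    intro a ha b hb
    exact Subtype.ext (ha.trans hb.symm)
  have h1c : ({x : Set.Icc (0:ℝ) 1 | (x:ℝ) = 1}).Countable := by
    apply Set.Subsingleton.countable
    intro a ha b hb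
    exact Subtype.ext (ha.trans hb.symm)
  -- cover of E \ O
  have hcover : E \ O ⊆ (CL ∪ CR) ∪ ({x : Set.Icc (0:ℝ) 1 | (x:ℝ) = 0} ∪
      {x : Set.Icc (0:ℝ) 1 | (x:ℝ) = 1}) := by
    rintro x ⟨hxE, hxO⟩
    have hUnhds : U ∈ nhds (s x) := hU.mem_nhds hxE
    cases hb : (ofLex (s x)).2 with
    | false =>
      by_cases hx0 : (x:ℝ) = 0
      · exact Or.inr (Or.inl hx0)
      · -- x is not the left endpoint; get a left interval
        have hx0' : (0:ℝ) < (x:ℝ) := lt_of_le_of_ne x.2.1 (Ne.symm hx0)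
        have hsx : s x = toLex (x, false) := by rw [hsy x, hb]
        have hbot : (toLex ((⟨0, by norm_num⟩ : Set.Icc (0:ℝ) 1), false) : SplitInterval) < s x := by
          rw [hsx]
          exact Prod.Lex.lt_iff.mpr (Or.inl hx0')
        obtain ⟨l, hl_lt, hIoc⟩ := exists_Ioc_subset_of_mem_nhds hUnhds ⟨_, hbot⟩
        have hax : ((ofLex l).1 : ℝ) < (x:ℝ) := by
          have hl' : toLex ((ofLex l).1, (ofLex l).2) < toLex ((x : Set.Icc (0:ℝ) 1), false) := by
            rw [← hsx]; exact hl_lt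
          rcases Prod.Lex.lt_iff.mp hl' with h | ⟨_, h⟩
          · exact h
          · simp [Bool.lt_iff] at h
        obtain ⟨q, hq1, hq2⟩ := exists_rat_btwn hax
        refine Or.inl (Or.inl ⟨hxO, q, hq2, ?_⟩)
        intro y hqy hyx
        have hly : l < s y := by
          rw [hsy y]
          calc l = toLex ((ofLex l).1, (ofLex l).2) := rfl
          _ < toLex (y, (ofLex (s y)).2) :=
            Prod.Lex.lt_iff.mpr (Or.inl (hq1.trans hqy))
        have hysx : s y ≤ s x := by
          rcases eq_or_lt_of_le hyx with rfl | hlt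
          · exact le_refl _
          · apply le_of_lt
            rw [hsy y, hsx]
            exact Prod.Lex.lt_iff.mpr (Or.inl hlt)
        exact hIoc ⟨hly, hysx⟩
    | true =>
      by_cases hx1 : (x:ℝ) = 1
      · exact Or.inr (Or.inr hx1)
      · have hx1' : (x:ℝ) < 1 := lt_of_le_of_ne x.2.2 hx1
        have hsx : s x = toLex (x, true) := by rw [hsy x, hb]
        have htop : s x < (toLex ((⟨1, by norm_num⟩ : Set.Icc (0:ℝ) 1), true) : SplitInterval) := by
          rw [hsx]
          exact Prod.Lex.lt_iff.mpr (Or.inl hx1')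
        obtain ⟨u, hu_lt, hIco⟩ := exists_Ico_subset_of_mem_nhds hUnhds ⟨_, htop⟩
        have hxb : (x:ℝ) < ((ofLex u).1 : ℝ) := by
          have hu' : toLex ((x : Set.Icc (0:ℝ) 1), true) < toLex ((ofLex u).1, (ofLex u).2) := by
            rw [← hsx]; exact hu_lt
          rcases Prod.Lex.lt_iff.mp hu' with h | ⟨_, h⟩
          · exact h
          · simp [Bool.lt_iff] at h
        obtain ⟨q, hq1, hq2⟩ := exists_rat_btwn hxb
        refine Or.inl (Or.inr ⟨hxO, q, hq1, ?_⟩)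
        intro y hxy hyq
        have hyu : s y < u := by
          rw [hsy y]
          calc toLex ((y : Set.Icc (0:ℝ) 1), (ofLex (s y)).2)
              < toLex ((ofLex u).1, (ofLex u).2) :=
            Prod.Lex.lt_iff.mpr (Or.inl (hyq.trans hq2))
          _ = u := rfl
        have hsxy : s x ≤ s y := by
          rcases eq_or_lt_of_le hxy with rfl | hlt
          · exact le_refl _
          · apply le_of_lt
            rw [hsy y, hsx]
            exact Prod.Lex.lt_iff.mpr (Or.inl hlt)
        exact hIco ⟨hsxy, hyu⟩
  -- conclude
  have hEdecomp : E = O ∪ (E \ O) :=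
    (Set.union_diff_cancel interior_subset).symm
  show IsFsigma E
  rw [hEdecomp]
  exact (isFsigma_of_isOpen isOpen_interior).union
    (isFsigma_of_countable (Set.Countable.mono hcover ((hCLc.union hCRc).union (h0c.union h1c))))
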